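/- Suppose R_M ⫫ M | (X, A, Y) and R_Y ⫫ (M, Y) | (X, A, R_M) (Model S5), with all relevant conditional probabilities strictly between 0 and 1. Then 1 / P(R_M = 1 | X, A, Y) = 1 + odds(R_M = 0 | X, A, Y, R_Y = 1) · [P(R_Y = 1 | X, A, R_M = 1) / P(R_Y = 1 | X, A, R_M = 0)]. -/

import Mathlib

open scoped Classical

noncomputable def Pr {Ω : Type*} [Fintype Ω] (p : Ω → ℝ) (E : Ω → Prop) : ℝ :=
  ∑ ω, if E ω then p ω else 0

noncomputable def cPr {Ω : Type*} [Fintype Ω] (p : Ω → ℝ) (E F : Ω → Prop) : ℝ :=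
  Pr p (fun ω => E ω ∧ F ω) / Pr p F

noncomputable def odds {Ω : Type*} [Fintype Ω] (p : Ω → ℝ) (E F : Ω → Prop) : ℝ :=
  cPr p E F / cPr p (fun ω => ¬ E ω) F

section
variable {Ω : Type*} [Fintype Ω]

lemma Pr_congr (p : Ω → ℝ) {E F : Ω → Prop} (h : ∀ ω, E ω ↔ F ω) : Pr p E = Pr p F :=
  Finset.sum_congr rfl fun ω _ => by rw [h ω]

lemma Pr_nonneg (p : Ω → ℝ) (hp : ∀ ω, 0 ≤ p ω) (E : Ω → Prop) : 0 ≤ Pr p E :=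
  Finset.sum_nonneg fun ω _ => by split <;> [exact hp ω; rfl]

lemma Pr_mono (p : Ω → ℝ) (hp : ∀ ω, 0 ≤ p ω) {E F : Ω → Prop}
    (h : ∀ ω, E ω → F ω) : Pr p E ≤ Pr p F := by
  apply Finset.sum_le_sum
  intro ω _
  by_cases hE : E ω
  · simp [hE, h ω hE]
  · simp only [hE, if_false]
    split <;> [exact hp ω; rfl]

lemma Pr_fiber {ℳ : Type*} (p : Ω → ℝ) (M : Ω → ℳ) (E : Ω → Prop) :
    Pr p E = ∑ m ∈ Finset.univ.image M, Pr p (fun ω => M ω = m ∧ E ω) := by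
  unfold Pr
  rw [Finset.sum_comm]
  apply Finset.sum_congr rfl
  intro ω _
  by_cases hE : E ω
  · simp only [hE, and_true]
    rw [Finset.sum_ite_eq]
    simp [Finset.mem_image]
  · simp [hE]
end

/-- Expression for `1 / P(R_M = 1 ∣ X, A, Y)` under Model S5. -/
theorem S5_inverse_propensity
    {Ω 𝒳 𝒜 ℳ 𝒴 : Type*} [Fintype Ω]
    (p : Ω → ℝ) (hp : ∀ ω, 0 ≤ p ω) (hsum : ∑ ω, p ω = 1)
    (X : Ω → 𝒳) (A : Ω → 𝒜) (M : Ω → ℳ) (Y : Ω → 𝒴) (RM RY : Ω → ℕ)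
    (hRM : ∀ ω, RM ω = 0 ∨ RM ω = 1) (hRY : ∀ ω, RY ω = 0 ∨ RY ω = 1)
    -- R_M ⫫ M ∣ (X, A, Y)
    (h1 : ∀ (rm : ℕ) (m : ℳ) (x : 𝒳) (a : 𝒜) (y : 𝒴),
      0 < Pr p (fun ω => M ω = m ∧ X ω = x ∧ A ω = a ∧ Y ω = y) →
      cPr p (fun ω => RM ω = rm) (fun ω => M ω = m ∧ X ω = x ∧ A ω = a ∧ Y ω = y)
        = cPr p (fun ω => RM ω = rm) (fun ω => X ω = x ∧ A ω = a ∧ Y ω = y))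
    -- R_Y ⫫ (M, Y) ∣ (X, A, R_M)
    (h2 : ∀ (ry : ℕ) (m : ℳ) (y : 𝒴) (x : 𝒳) (a : 𝒜) (rm : ℕ),
      0 < Pr p (fun ω => M ω = m ∧ Y ω = y ∧ X ω = x ∧ A ω = a ∧ RM ω = rm) →
      cPr p (fun ω => RY ω = ry)
          (fun ω => M ω = m ∧ Y ω = y ∧ X ω = x ∧ A ω = a ∧ RM ω = rm)
        = cPr p (fun ω => RY ω = ry) (fun ω => X ω = x ∧ A ω = a ∧ RM ω = rm)) :
    ∀ (x : 𝒳) (a : 𝒜) (y : 𝒴),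
      (∀ r s : Fin 2, 0 < Pr p (fun ω => RM ω = (r : ℕ) ∧ RY ω = (s : ℕ) ∧
          X ω = x ∧ A ω = a ∧ Y ω = y)) →
      1 / cPr p (fun ω => RM ω = 1) (fun ω => X ω = x ∧ A ω = a ∧ Y ω = y)
        = 1 + odds p (fun ω => RM ω = 0)
              (fun ω => X ω = x ∧ A ω = a ∧ Y ω = y ∧ RY ω = 1)
            * (cPr p (fun ω => RY ω = 1) (fun ω => X ω = x ∧ A ω = a ∧ RM ω = 1)
              / cPr p (fun ω => RY ω = 1) (fun ω => X ω = x ∧ A ω = a ∧ RM ω = 0)) := by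
  intro x a y hpos
  -- canonical quantities
  -- B r = Pr (RM = r ∧ RY = 1 ∧ X ∧ A ∧ Y), N r = Pr (RM = r ∧ X ∧ A ∧ Y)
  have hB0pos : 0 < Pr p (fun ω => RM ω = 0 ∧ RY ω = 1 ∧
      X ω = x ∧ A ω = a ∧ Y ω = y) := by simpa using hpos 0 1
  have hB1pos : 0 < Pr p (fun ω => RM ω = 1 ∧ RY ω = 1 ∧
      X ω = x ∧ A ω = a ∧ Y ω = y) := by simpa using hpos 1 1
  have hN0pos : 0 < Pr p (fun ω => RM ω = 0 ∧ X ω = x ∧ A ω = a ∧ Y ω = y) :=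
    lt_of_lt_of_le hB0pos (Pr_mono p hp (by tauto))
  have hN1pos : 0 < Pr p (fun ω => RM ω = 1 ∧ X ω = x ∧ A ω = a ∧ Y ω = y) :=
    lt_of_lt_of_le hB1pos (Pr_mono p hp (by tauto))
  -- the key identity: B r = q r * N r
  have hkey : ∀ r : ℕ,
      Pr p (fun ω => RM ω = r ∧ RY ω = 1 ∧ X ω = x ∧ A ω = a ∧ Y ω = y)
        = cPr p (fun ω => RY ω = 1) (fun ω => X ω = x ∧ A ω = a ∧ RM ω = r)
          * Pr p (fun ω => RM ω = r ∧ X ω = x ∧ A ω = a ∧ Y ω = y) := by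
    intro r
    rw [Pr_fiber p M (fun ω => RM ω = r ∧ RY ω = 1 ∧ X ω = x ∧ A ω = a ∧ Y ω = y),
        Pr_fiber p M (fun ω => RM ω = r ∧ X ω = x ∧ A ω = a ∧ Y ω = y),
        Finset.mul_sum]
    apply Finset.sum_congr rfl
    intro m _
    have eD : Pr p (fun ω => M ω = m ∧ RM ω = r ∧ X ω = x ∧ A ω = a ∧ Y ω = y)
        = Pr p (fun ω => M ω = m ∧ Y ω = y ∧ X ω = x ∧ A ω = a ∧ RM ω = r) :=
      Pr_congr p (by tauto)
    have eL : Pr p (fun ω => M ω = m ∧ RM ω = r ∧ RY ω = 1 ∧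
          X ω = x ∧ A ω = a ∧ Y ω = y)
        = Pr p (fun ω => RY ω = 1 ∧
            (M ω = m ∧ Y ω = y ∧ X ω = x ∧ A ω = a ∧ RM ω = r)) :=
      Pr_congr p (by tauto)
    rw [eD, eL]
    by_cases hD : 0 < Pr p (fun ω => M ω = m ∧ Y ω = y ∧ X ω = x ∧ A ω = a ∧ RM ω = r)
    · have h := h2 1 m y x a r hD
      rw [cPr, div_eq_iff hD.ne'] at h
      exact h
    · have hD0 : Pr p (fun ω => M ω = m ∧ Y ω = y ∧ X ω = x ∧ A ω = a ∧ RM ω = r) = 0 :=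
        le_antisymm (not_lt.mp hD) (Pr_nonneg p hp _)
      have hle : Pr p (fun ω => RY ω = 1 ∧
            (M ω = m ∧ Y ω = y ∧ X ω = x ∧ A ω = a ∧ RM ω = r))
          ≤ Pr p (fun ω => M ω = m ∧ Y ω = y ∧ X ω = x ∧ A ω = a ∧ RM ω = r) :=
        Pr_mono p hp (by tauto)
      have hge := Pr_nonneg p hp (fun ω => RY ω = 1 ∧
            (M ω = m ∧ Y ω = y ∧ X ω = x ∧ A ω = a ∧ RM ω = r))
      rw [hD0] at hle ⊢
      linarith
  -- positivity of the conditional probabilities q r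
  have hq : ∀ r : ℕ, 0 < Pr p (fun ω => RM ω = r ∧ RY ω = 1 ∧
        X ω = x ∧ A ω = a ∧ Y ω = y) →
      0 < Pr p (fun ω => RM ω = r ∧ X ω = x ∧ A ω = a ∧ Y ω = y) →
      0 < cPr p (fun ω => RY ω = 1) (fun ω => X ω = x ∧ A ω = a ∧ RM ω = r) := by
    intro r hB hN
    have := hkey r
    nlinarith [this]
  have hq0 := hq 0 hB0pos hN0pos
  have hq1 := hq 1 hB1pos hN1pos
  -- split P and PG
  have hsplit : ∀ (E : Ω → Prop), Pr p E
      = Pr p (fun ω => RM ω = 0 ∧ E ω) + Pr p (fun ω => RM ω = 1 ∧ E ω) := by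
    intro E
    unfold Pr
    rw [← Finset.sum_add_distrib]
    apply Finset.sum_congr rfl
    intro ω _
    rcases hRM ω with h | h <;> by_cases hE : E ω <;> simp [h, hE]
  have hP : Pr p (fun ω => X ω = x ∧ A ω = a ∧ Y ω = y)
      = Pr p (fun ω => RM ω = 0 ∧ X ω = x ∧ A ω = a ∧ Y ω = y)
        + Pr p (fun ω => RM ω = 1 ∧ X ω = x ∧ A ω = a ∧ Y ω = y) :=
    hsplit _
  have hPG : Pr p (fun ω => X ω = x ∧ A ω = a ∧ Y ω = y ∧ RY ω = 1)
      = Pr p (fun ω => RM ω = 0 ∧ RY ω = 1 ∧ X ω = x ∧ A ω = a ∧ Y ω = y)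
        + Pr p (fun ω => RM ω = 1 ∧ RY ω = 1 ∧ X ω = x ∧ A ω = a ∧ Y ω = y) := by
    rw [hsplit (fun ω => X ω = x ∧ A ω = a ∧ Y ω = y ∧ RY ω = 1)]
    congr 1 <;> exact Pr_congr p (by tauto)
  set q0 := cPr p (fun ω => RY ω = 1) (fun ω => X ω = x ∧ A ω = a ∧ RM ω = 0) with hq0d
  set q1 := cPr p (fun ω => RY ω = 1) (fun ω => X ω = x ∧ A ω = a ∧ RM ω = 1) with hq1d
  simp only [odds, cPr]
  have eodds0 : Pr p (fun ω => RM ω = 0 ∧ X ω = x ∧ A ω = a ∧ Y ω = y ∧ RY ω = 1)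
      = Pr p (fun ω => RM ω = 0 ∧ RY ω = 1 ∧ X ω = x ∧ A ω = a ∧ Y ω = y) :=
    Pr_congr p (by tauto)
  have eodds1 : Pr p (fun ω => ¬RM ω = 0 ∧ X ω = x ∧ A ω = a ∧ Y ω = y ∧ RY ω = 1)
      = Pr p (fun ω => RM ω = 1 ∧ RY ω = 1 ∧ X ω = x ∧ A ω = a ∧ Y ω = y) :=
    Pr_congr p (fun ω => by rcases hRM ω with h | h <;> simp [h] <;> tauto)
  rw [eodds0, eodds1, hPG, hP, hkey 0, hkey 1]
  have h1' : (0:ℝ) < q0 * Pr p (fun ω => RM ω = 0 ∧ X ω = x ∧ A ω = a ∧ Y ω = y)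
      + q1 * Pr p (fun ω => RM ω = 1 ∧ X ω = x ∧ A ω = a ∧ Y ω = y) := by positivity
  rw [← hq0d, ← hq1d]
  field_simp
  ring
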